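/- Let λ ∈ ℝᵏ and let g be an ℝᵏ-valued random vector with independent standard Gumbel coordinates. For temperature T > 0, define the Gumbel-softmax random variable κ̃_T = softmax((λ + g)/T), taking values in the probability simplex in ℝᵏ. Then as T → 0⁺, κ̃_T converges in distribution to the random one-hot vector e_{argmax_i(λ_i + g_i)}, whose index is a categorical random variable with category probabilities softmax(λ); that is, the Gumbel-softmax distribution with parameters λ and T converges weakly, as T → 0, to the categorical distribution with probabilities softmax(λ) supported on the vertices of the simplex. -/

import Mathlib

open MeasureTheory ProbabilityTheory Filter
open scoped NNReal ENNReal BigOperators Topology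

/-- The standard Gumbel distribution on `ℝ`, with cumulative distribution function
`F(x) = exp(−exp(−x))`, given here by its density `exp(−x − exp(−x))` with respect to Lebesgue
measure. -/
noncomputable def stdGumbel : Measure ℝ :=
  MeasureTheory.volume.withDensity fun x => ENNReal.ofReal (Real.exp (-x - Real.exp (-x)))

/-- The softmax of `v ∈ ℝᵏ`: the probability vector with `j`-th entry
`exp(v j) / ∑ i, exp(v i)`. -/
noncomputable def softmax {k : ℕ} (v : Fin k → ℝ) : Fin k → ℝ :=
  fun j => Real.exp (v j) / ∑ i, Real.exp (v i)

/-- The `j`-th vertex of the probability simplex in `ℝᵏ` (the `j`-th standard basis vector). -/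
def onehot {k : ℕ} (j : Fin k) : Fin k → ℝ :=
  fun i => if i = j then 1 else 0


open Filter Set

lemma gumbel_hasDerivAt (S : ℝ) (hS : S ≠ 0) (t : ℝ) :
    HasDerivAt (fun t : ℝ => S⁻¹ * Real.exp (-(S * Real.exp (-t))))
      (Real.exp (-t - S * Real.exp (-t))) t := by
  have h1 : HasDerivAt (fun t : ℝ => -(S * Real.exp (-t))) (S * Real.exp (-t)) t := by
    have := (((hasDerivAt_id t).neg.exp.const_mul S).neg)
    simpa [Pi.neg_def] using this
  have h2 := h1.exp.const_mul S⁻¹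
  refine HasDerivAt.congr_deriv h2 ?_
  rw [show -t - S * Real.exp (-t) = -(S * Real.exp (-t)) + -t by ring, Real.exp_add]
  field_simp

lemma gumbel_tendsto_atTop (S : ℝ) :
    Tendsto (fun t : ℝ => S⁻¹ * Real.exp (-(S * Real.exp (-t)))) atTop (𝓝 S⁻¹) := by
  have h : Tendsto (fun t : ℝ => -(S * Real.exp (-t))) atTop (𝓝 0) := by
    have := (Real.tendsto_exp_atBot.comp tendsto_neg_atTop_atBot).const_mul S
    simpa using this.neg
  have := (Real.continuous_exp.tendsto 0).comp h
  simpa using this.const_mul S⁻¹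

lemma gumbel_tendsto_atBot (S : ℝ) (hS : 0 < S) :
    Tendsto (fun t : ℝ => S⁻¹ * Real.exp (-(S * Real.exp (-t)))) atBot (𝓝 0) := by
  have h : Tendsto (fun t : ℝ => -(S * Real.exp (-t))) atBot atBot := by
    refine tendsto_neg_atTop_atBot.comp ?_
    exact (tendsto_const_mul_atTop_of_pos hS).mpr
      (Real.tendsto_exp_atTop.comp tendsto_neg_atBot_atTop)
  have := Real.tendsto_exp_atBot.comp h
  simpa using this.const_mul S⁻¹

lemma gumbel_bound (S : ℝ) (hS : 0 < S) (t : ℝ) :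
    Real.exp (-t - S * Real.exp (-t)) ≤ 4 / S ^ 2 * Real.exp t := by
  set A := Real.exp (-t) with hA
  have hu : 0 < A := Real.exp_pos _
  have key : (S * A) ^ 2 ≤ 4 * Real.exp (S * A) := by
    have h1 := Real.add_one_le_exp (S * A / 2)
    have h2 : Real.exp (S * A / 2) * Real.exp (S * A / 2) = Real.exp (S * A) := by
      rw [← Real.exp_add]; ring_nf
    nlinarith [Real.exp_pos (S * A / 2), mul_pos hS hu]
  have hE : (0:ℝ) < Real.exp (S * A) := Real.exp_pos _
  have hsplit : Real.exp (-t - S * A) = A / Real.exp (S * A) := by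
    rw [div_eq_mul_inv, ← Real.exp_neg, ← Real.exp_add]; ring_nf
  rw [hsplit, div_le_iff₀ hE, div_mul_eq_mul_div, div_mul_eq_mul_div,
    le_div_iff₀ (by positivity : (0:ℝ) < S ^ 2)]
  have h5 : A * (A * Real.exp t) = A := by
    rw [hA, ← Real.exp_add, ← Real.exp_add]; ring_nf
  nlinarith [mul_le_mul_of_nonneg_right key (Real.exp_pos t).le]

lemma gumbel_integrable (S : ℝ) (hS : 0 < S) :
    Integrable (fun t : ℝ => Real.exp (-t - S * Real.exp (-t))) := by
  have hcont : Continuous fun t : ℝ => Real.exp (-t - S * Real.exp (-t)) := by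
    fun_prop
  rw [← integrableOn_univ, ← Set.Iic_union_Ioi (a := (0:ℝ))]
  refine IntegrableOn.union ?_ ?_
  · refine Integrable.mono ((integrableOn_exp_Iic 0).const_mul (4 / S ^ 2))
      hcont.aestronglyMeasurable.restrict ?_
    refine Filter.Eventually.of_forall fun t => ?_
    rw [Real.norm_eq_abs, abs_of_pos (Real.exp_pos _), Real.norm_eq_abs,
      abs_of_pos (by positivity)]
    exact gumbel_bound S hS t
  · exact integrableOn_Ioi_deriv_of_nonneg' (fun x _ => gumbel_hasDerivAt S hS.ne' x)
      (fun x _ => (Real.exp_pos _).le) (gumbel_tendsto_atTop S)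

lemma gumbel_integral (S : ℝ) (hS : 0 < S) :
    ∫ t : ℝ, Real.exp (-t - S * Real.exp (-t)) = S⁻¹ := by
  have := integral_of_hasDerivAt_of_tendsto (gumbel_hasDerivAt S hS.ne')
    (gumbel_integrable S hS) (gumbel_tendsto_atBot S hS) (gumbel_tendsto_atTop S)
  simpa using this

lemma gumbel_integral_Iio (S : ℝ) (hS : 0 < S) (a : ℝ) :
    ∫ t in Iio a, Real.exp (-t - S * Real.exp (-t))
      = S⁻¹ * Real.exp (-(S * Real.exp (-a))) := by
  rw [← integral_Iic_eq_integral_Iio]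
  have := integral_Iic_of_hasDerivAt_of_tendsto' (a := a)
    (fun x _ => gumbel_hasDerivAt S hS.ne' x)
    ((gumbel_integrable S hS).integrableOn) (gumbel_tendsto_atBot S hS)
  simpa using this

lemma gumbel_density_one (t : ℝ) :
    Real.exp (-t - Real.exp (-t)) = Real.exp (-t - 1 * Real.exp (-t)) := by rw [one_mul]

lemma stdGumbel_Iio (a : ℝ) :
    stdGumbel (Iio a) = ENNReal.ofReal (Real.exp (-Real.exp (-a))) := by
  rw [stdGumbel, withDensity_apply _ measurableSet_Iio,
    ← ofReal_integral_eq_lintegral_ofReal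
      (((gumbel_integrable 1 one_pos).integrableOn (s := Iio a)).congr_fun
        (fun x _ => (gumbel_density_one x).symm) measurableSet_Iio)
      (Filter.Eventually.of_forall fun x => (Real.exp_pos _).le)]
  congr 1
  calc ∫ t in Iio a, Real.exp (-t - Real.exp (-t))
      = ∫ t in Iio a, Real.exp (-t - 1 * Real.exp (-t)) := by
        simp_rw [one_mul]
    _ = 1⁻¹ * Real.exp (-(1 * Real.exp (-a))) := gumbel_integral_Iio 1 one_pos a
    _ = Real.exp (-Real.exp (-a)) := by norm_num

lemma stdGumbel_singleton (c : ℝ) : stdGumbel {c} = 0 := by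
  rw [stdGumbel, withDensity_apply _ (measurableSet_singleton c)]
  rw [Measure.restrict_eq_zero.mpr (measure_singleton c)]
  simp

lemma continuous_softmax {k : ℕ} (hk : 0 < k) : Continuous (softmax (k := k)) := by
  have hpos : ∀ v : Fin k → ℝ, (0:ℝ) < ∑ i, Real.exp (v i) := fun v =>
    Finset.sum_pos (fun i _ => Real.exp_pos _) ⟨⟨0, hk⟩, Finset.mem_univ _⟩
  refine continuous_pi fun j => ?_
  exact (Real.continuous_exp.comp (continuous_apply j)).div
    (continuous_finset_sum _ fun i _ => Real.continuous_exp.comp (continuous_apply i))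
    fun v => (hpos v).ne'

lemma tendsto_softmax {k : ℕ} (y : Fin k → ℝ) (j₀ : Fin k)
    (hmax : ∀ i, i ≠ j₀ → y i < y j₀) :
    Tendsto (fun T : ℝ => softmax fun i => y i / T) (𝓝[>] 0) (𝓝 (onehot j₀)) := by
  rw [tendsto_pi_nhds]
  intro j
  have hrw : ∀ T : ℝ, softmax (fun i => y i / T) j
      = Real.exp ((y j - y j₀) / T) / ∑ i, Real.exp ((y i - y j₀) / T) := by
    intro T
    have key : ∀ i, Real.exp (y i / T) = Real.exp ((y i - y j₀) / T) * Real.exp (y j₀ / T) := by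
      intro i; rw [← Real.exp_add, ← add_div]; ring_nf
    rw [softmax, key j, Finset.sum_congr rfl fun i _ => key i, ← Finset.sum_mul,
      mul_div_mul_right _ _ (Real.exp_ne_zero _)]
  simp only [hrw]
  have hE : ∀ i : Fin k, Tendsto (fun T : ℝ => Real.exp ((y i - y j₀) / T)) (𝓝[>] 0)
      (𝓝 (if i = j₀ then 1 else 0)) := by
    intro i
    by_cases hi : i = j₀
    · subst hi; simp [Real.exp_zero]
    · simp only [hi, if_neg]
      have h1 : Tendsto (fun T : ℝ => (y i - y j₀) / T) (𝓝[>] 0) atBot := by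
        simp only [div_eq_mul_inv]
        exact tendsto_inv_nhdsGT_zero.const_mul_atTop_of_neg
          (sub_neg.mpr (hmax i hi))
      exact Real.tendsto_exp_atBot.comp h1
  have hsum : Tendsto (fun T : ℝ => ∑ i, Real.exp ((y i - y j₀) / T)) (𝓝[>] 0) (𝓝 1) := by
    have := tendsto_finset_sum Finset.univ (fun i _ => hE i)
    simpa [Finset.sum_ite_eq' Finset.univ j₀ (fun _ => (1:ℝ))] using this
  have := (hE j).div hsum one_ne_zero
  simpa [onehot, Pi.div_def] using this

section PiGumbel

variable [IsProbabilityMeasure stdGumbel] {n : ℕ}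

lemma pi_gumbel_hyperplane (i' : Fin n) (c : ℝ) :
    Measure.pi (fun _ : Fin n => stdGumbel) {y | y i' = c} = 0 := by
  have : {y : Fin n → ℝ | y i' = c} = Function.eval i' ⁻¹' ({c} : Set ℝ) := rfl
  rw [this]
  exact Measure.pi_eval_preimage_null (μ := fun _ : Fin n => stdGumbel)
    (stdGumbel_singleton c)

lemma pi_gumbel_pair_null (lam : Fin (n + 1) → ℝ) {i j : Fin (n + 1)} (hij : i ≠ j) :
    Measure.pi (fun _ : Fin (n + 1) => stdGumbel) {x | lam i + x i = lam j + x j} = 0 := by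
  obtain ⟨i', rfl⟩ := Fin.exists_succAbove_eq hij
  set e := MeasurableEquiv.piFinSuccAbove (fun _ : Fin (n + 1) => ℝ) j with he
  have hmp := measurePreserving_piFinSuccAbove (fun _ : Fin (n + 1) => stdGumbel) j
  set B : Set (ℝ × (Fin n → ℝ)) := {p | lam (j.succAbove i') + p.2 i' = lam j + p.1} with hB
  have hBm : MeasurableSet B := by
    exact measurableSet_eq_fun (by fun_prop) (by fun_prop)
  have hset : {x : Fin (n + 1) → ℝ |
      lam (j.succAbove i') + x (j.succAbove i') = lam j + x j} = e ⁻¹' B := by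
    ext x
    simp only [hB, he, Set.mem_preimage, Set.mem_setOf_eq,
      MeasurableEquiv.piFinSuccAbove, MeasurableEquiv.coe_mk, Equiv.coe_fn_mk,
      Fin.insertNthEquiv, Fin.removeNth, Equiv.coe_fn_symm_mk]
  rw [hset, hmp.measure_preimage hBm.nullMeasurableSet, Measure.prod_apply hBm]
  have : ∀ t : ℝ, (Prod.mk t ⁻¹' B) = {y : Fin n → ℝ | y i' = lam j + t - lam (j.succAbove i')} := by
    intro t; ext y; simp [hB]; constructor <;> intro h <;> linarith
  simp_rw [this, pi_gumbel_hyperplane]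
  simp

lemma pi_gumbel_win (lam : Fin (n + 1) → ℝ) (j : Fin (n + 1)) :
    Measure.pi (fun _ : Fin (n + 1) => stdGumbel)
      {x | ∀ i, i ≠ j → lam i + x i < lam j + x j} = ENNReal.ofReal (softmax lam j) := by
  set e := MeasurableEquiv.piFinSuccAbove (fun _ : Fin (n + 1) => ℝ) j with he
  have hmp := measurePreserving_piFinSuccAbove (fun _ : Fin (n + 1) => stdGumbel) j
  set B : Set (ℝ × (Fin n → ℝ)) :=
    {p | ∀ i', p.2 i' < lam j + p.1 - lam (j.succAbove i')} with hB
  have hBm : MeasurableSet B := by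
    rw [hB, Set.setOf_forall]
    exact MeasurableSet.iInter fun i' => measurableSet_lt (by fun_prop) (by fun_prop)
  have hset : {x : Fin (n + 1) → ℝ | ∀ i, i ≠ j → lam i + x i < lam j + x j} = e ⁻¹' B := by
    ext x
    simp only [hB, he, Set.mem_preimage, Set.mem_setOf_eq,
      MeasurableEquiv.piFinSuccAbove, MeasurableEquiv.coe_mk, Equiv.coe_fn_mk,
      Fin.insertNthEquiv, Fin.removeNth, Equiv.coe_fn_symm_mk]
    constructor
    · intro h i'
      have := h (j.succAbove i') (Fin.succAbove_ne j i')
      linarith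
    · intro h i hi
      obtain ⟨i', rfl⟩ := Fin.exists_succAbove_eq hi
      have := h i'
      linarith
  set c : ℝ := ∑ i', Real.exp (lam (j.succAbove i') - lam j) with hc
  have hc0 : 0 ≤ c := Finset.sum_nonneg fun _ _ => (Real.exp_pos _).le
  set S : ℝ := 1 + c with hS
  have hS0 : 0 < S := by positivity
  rw [hset, hmp.measure_preimage hBm.nullMeasurableSet, Measure.prod_apply hBm]
  have hsec : ∀ t : ℝ, (Prod.mk t ⁻¹' B)
      = Set.pi Set.univ fun i' => Iio (lam j + t - lam (j.succAbove i')) := by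
    intro t; ext y; simp [hB]
  have hinner : ∀ t : ℝ, Measure.pi (fun _ : Fin n => stdGumbel) (Prod.mk t ⁻¹' B)
      = ENNReal.ofReal (Real.exp (-(c * Real.exp (-t)))) := by
    intro t
    rw [hsec t, Measure.pi_pi]
    simp_rw [stdGumbel_Iio]
    rw [← ENNReal.ofReal_prod_of_nonneg fun _ _ => (Real.exp_pos _).le]
    congr 1
    rw [← Real.exp_sum]
    congr 1
    simp_rw [show ∀ m : Fin (n + 1), -(lam j + t - lam m) = lam m - lam j + -t from
      fun m => by ring, Real.exp_add]
    rw [Finset.sum_neg_distrib, hc, Finset.sum_mul]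
  simp_rw [hinner]
  have hdens : Measurable fun x : ℝ => ENNReal.ofReal (Real.exp (-x - Real.exp (-x))) := by
    fun_prop
  have hg : Measurable fun t : ℝ => ENNReal.ofReal (Real.exp (-(c * Real.exp (-t)))) := by
    fun_prop
  rw [stdGumbel, lintegral_withDensity_eq_lintegral_mul _ hdens hg]
  have hcomb : ∀ t : ℝ,
      ENNReal.ofReal (Real.exp (-t - Real.exp (-t))) *
        ENNReal.ofReal (Real.exp (-(c * Real.exp (-t))))
      = ENNReal.ofReal (Real.exp (-t - S * Real.exp (-t))) := by
    intro t
    rw [← ENNReal.ofReal_mul (Real.exp_pos _).le, ← Real.exp_add]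
    congr 2
    rw [hS]; ring
  simp only [Pi.mul_apply, hcomb]
  rw [← ofReal_integral_eq_lintegral_ofReal (gumbel_integrable S hS0)
    (Filter.Eventually.of_forall fun t => (Real.exp_pos _).le), gumbel_integral S hS0]
  congr 1
  rw [softmax]
  have hSsum : S = (∑ i, Real.exp (lam i)) / Real.exp (lam j) := by
    rw [hS, hc, Fin.sum_univ_succAbove (fun i => Real.exp (lam i)) j, add_div]
    congr 1
    · rw [div_self (Real.exp_ne_zero _)]
    · rw [Finset.sum_div]
      exact Finset.sum_congr rfl fun i' _ => by rw [Real.exp_sub]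
  rw [hSsum, inv_div]

end PiGumbel

/-- Convergence of the Gumbel-softmax distribution to the categorical distribution: if
`g = (g 1, …, g k)` has independent standard Gumbel coordinates and `lam ∈ ℝᵏ`, then the
Gumbel-softmax random variable `κ̃_T = softmax ((lam + g)/T)` converges in distribution, as the
temperature `T → 0⁺`, to the random one-hot vector whose index is categorical with probabilities
`softmax lam`; i.e., for every bounded continuous function `f` on `ℝᵏ`, the expectation
`E[f (κ̃_T)]` tends to `∑ j, softmax lam j * f (e j)`, the expectation of `f` under the
categorical distribution with probabilities `softmax lam` supported on the vertices of the
simplex. -/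
theorem gumbel_softmax_tendsto_categorical
    {k : ℕ} (hk : 0 < k)
    {Ω : Type*} [MeasureSpace Ω] [IsProbabilityMeasure (ℙ : Measure Ω)]
    (lam : Fin k → ℝ) (g : Fin k → Ω → ℝ)
    (hmeas : ∀ i, Measurable (g i))
    (hindep : iIndepFun g ℙ)
    (hlaw : ∀ i, Measure.map (g i) ℙ = stdGumbel) :
    ∀ f : BoundedContinuousFunction (Fin k → ℝ) ℝ,
      Tendsto
        (fun T : ℝ => ∫ ω, f (softmax fun i => (lam i + g i ω) / T) ∂ℙ)
        (𝓝[>] 0)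
        (𝓝 (∑ j, softmax lam j * f (onehot j))) := by
  intro f
  obtain ⟨n, rfl⟩ : ∃ n, k = n + 1 := ⟨k - 1, (Nat.succ_pred_eq_of_pos hk).symm⟩
  haveI hP : IsProbabilityMeasure stdGumbel := by
    rw [← hlaw 0]; exact Measure.isProbabilityMeasure_map (hmeas 0).aemeasurable
  set μ : Measure (Fin (n + 1) → ℝ) := Measure.pi fun _ => stdGumbel with hμ
  haveI : IsProbabilityMeasure μ := by rw [hμ]; infer_instance
  have htuple : Measurable fun ω i => g i ω := measurable_pi_iff.mpr hmeas
  have hmap : Measure.map (fun ω i => g i ω) ℙ = μ := by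
    refine (Measure.pi_eq (μ := fun _ : Fin (n + 1) => stdGumbel) fun s hs => ?_).symm
    rw [Measure.map_apply htuple (MeasurableSet.univ_pi hs)]
    have hpre : (fun ω i => g i ω) ⁻¹' Set.pi univ s = ⋂ i, g i ⁻¹' s i := by
      ext ω; simp [Set.mem_univ_pi]
    rw [hpre, hindep.meas_iInter fun i => ⟨s i, hs i, rfl⟩]
    exact Finset.prod_congr rfl fun i _ => by
      rw [← Measure.map_apply (hmeas i) (hs i), hlaw i]
  set A : Fin (n + 1) → Set (Fin (n + 1) → ℝ) :=
    fun j => {x | ∀ i, i ≠ j → lam i + x i < lam j + x j} with hAdef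
  have hA : ∀ j, MeasurableSet (A j) := by
    intro j
    have h1 : ∀ i : Fin (n + 1),
        MeasurableSet {x : Fin (n + 1) → ℝ | lam i + x i < lam j + x j} :=
      fun i => measurableSet_lt (by fun_prop) (by fun_prop)
    rw [hAdef]
    simp only [Set.setOf_forall]
    refine MeasurableSet.iInter fun i => ?_
    by_cases hij : i = j
    · simp [hij]
    · simpa only [ne_eq, hij, not_false_eq_true, forall_true_left, Set.iInter_true] using h1 i
  set Flim : (Fin (n + 1) → ℝ) → ℝ :=
    fun x => ∑ j, Set.indicator (A j) (fun _ => f (onehot j)) x with hFlim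
  have hcontT : ∀ T : ℝ,
      Continuous fun x : Fin (n + 1) → ℝ => f (softmax fun i => (lam i + x i) / T) := by
    intro T
    exact f.continuous.comp ((continuous_softmax n.succ_pos).comp
      (continuous_pi fun i => (by fun_prop : Continuous fun x : Fin (n + 1) → ℝ => (lam i + x i) / T)))
  have hcongr : ∀ T : ℝ, ∫ ω, f (softmax fun i => (lam i + g i ω) / T) ∂ℙ
      = ∫ x, f (softmax fun i => (lam i + x i) / T) ∂μ := by
    intro T
    rw [← hmap, integral_map htuple.aemeasurable
      (hmap ▸ (hcontT T).aestronglyMeasurable :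
        AEStronglyMeasurable _ (Measure.map (fun ω i => g i ω) ℙ))]
  have key : Tendsto (fun T : ℝ => ∫ x, f (softmax fun i => (lam i + x i) / T) ∂μ)
      (𝓝[>] 0) (𝓝 (∫ x, Flim x ∂μ)) := by
    refine tendsto_integral_filter_of_dominated_convergence (fun _ => ‖f‖)
      (Filter.Eventually.of_forall fun T => (hcontT T).aestronglyMeasurable)
      (Filter.Eventually.of_forall fun T => Filter.Eventually.of_forall fun x =>
        f.norm_coe_le_norm _)
      (integrable_const _) ?_
    have hN : μ (⋃ (i) (j) (_ : i ≠ j),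
        {x : Fin (n + 1) → ℝ | lam i + x i = lam j + x j}) = 0 :=
      measure_iUnion_null fun i => measure_iUnion_null fun j =>
        measure_iUnion_null fun hij => pi_gumbel_pair_null lam hij
    filter_upwards [measure_eq_zero_iff_ae_notMem.mp hN] with x hx
    obtain ⟨j₀, -, hj₀⟩ := Finset.exists_max_image (Finset.univ : Finset (Fin (n + 1)))
      (fun i => lam i + x i) ⟨0, Finset.mem_univ 0⟩
    have hstrict : ∀ i, i ≠ j₀ → lam i + x i < lam j₀ + x j₀ := by
      intro i hi
      refine lt_of_le_of_ne (hj₀ i (Finset.mem_univ i)) fun heq => ?_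
      exact hx (Set.mem_iUnion.mpr ⟨i, Set.mem_iUnion.mpr ⟨j₀,
        Set.mem_iUnion.mpr ⟨hi, heq⟩⟩⟩)
    have h1 : Tendsto (fun T : ℝ => f (softmax fun i => (lam i + x i) / T)) (𝓝[>] 0)
        (𝓝 (f (onehot j₀))) :=
      (f.continuous.tendsto _).comp (tendsto_softmax (fun i => lam i + x i) j₀ hstrict)
    have hx0 : x ∈ A j₀ := hstrict
    have hne : ∀ j, j ≠ j₀ → x ∉ A j := by
      intro j hj hmem
      exact lt_asymm (hstrict j hj) (hmem j₀ (Ne.symm hj))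
    have hval : Flim x = f (onehot j₀) := by
      simp only [hFlim]
      rw [Finset.sum_eq_single j₀
        (fun j _ hj => Set.indicator_of_notMem (hne j hj) _)
        (fun h => absurd (Finset.mem_univ j₀) h)]
      rw [Set.indicator_of_mem hx0]
    rw [hval]
    exact h1
  have hint : ∫ x, Flim x ∂μ = ∑ j, softmax lam j * f (onehot j) := by
    rw [hFlim, integral_finset_sum _ fun j _ => (integrable_const _).indicator (hA j)]
    refine Finset.sum_congr rfl fun j _ => ?_
    rw [integral_indicator_const _ (hA j)]
    have hμA : μ (A j) = ENNReal.ofReal (softmax lam j) := pi_gumbel_win lam j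
    have hnn : (0:ℝ) ≤ softmax lam j :=
      div_nonneg (Real.exp_pos _).le (Finset.sum_nonneg fun i _ => (Real.exp_pos _).le)
    rw [measureReal_def, hμA, ENNReal.toReal_ofReal hnn, smul_eq_mul]
  rw [← hint]
  exact Tendsto.congr (fun T => (hcongr T).symm) key
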